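/- A module over any ring is finitely generated and projective if and only if it is finitely presented and flat. -/

import Mathlib

open scoped TensorProduct
open MulOpposite

/-- The balancing relations defining the tensor product `M ⊗_V N` of a right `V`-module `M`
and a left `V`-module `N` over a (possibly noncommutative) ring `V`, as a quotient of the
tensor product of abelian groups `M ⊗[ℤ] N`. -/
def tensorRel (V : Type) [Ring V] (M N : Type) [AddCommGroup M] [Module Vᵐᵒᵖ M]
    [AddCommGroup N] [Module V N] : Submodule ℤ (M ⊗[ℤ] N) :=
  Submodule.span ℤ
    {z | ∃ (m : M) (a : V) (n : N), z = (op a • m) ⊗ₜ[ℤ] n - m ⊗ₜ[ℤ] (a • n)}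

/-- The tensor product `M ⊗_V N` of a right `V`-module and a left `V`-module. -/
abbrev NCTensor (V : Type) [Ring V] (M N : Type) [AddCommGroup M] [Module Vᵐᵒᵖ M]
    [AddCommGroup N] [Module V N] : Type :=
  (M ⊗[ℤ] N) ⧸ tensorRel V M N

/-- The map `M ⊗_V N → M ⊗_V N'` induced by a map `f : N → N'` of left `V`-modules. -/
noncomputable def NCTensor.map (V : Type) [Ring V] (M : Type) [AddCommGroup M]
    [Module Vᵐᵒᵖ M] {N N' : Type} [AddCommGroup N] [Module V N] [AddCommGroup N']
    [Module V N'] (f : N →ₗ[V] N') : NCTensor V M N →ₗ[ℤ] NCTensor V M N' :=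
  Submodule.mapQ _ _
    (TensorProduct.map LinearMap.id f.toAddMonoidHom.toIntLinearMap)
    (by
      rw [tensorRel, Submodule.span_le]
      rintro z ⟨m, a, n, rfl⟩
      simp only [SetLike.mem_coe, Submodule.mem_comap, map_sub, TensorProduct.map_tmul,
        LinearMap.id_coe, id_eq, AddMonoidHom.coe_toIntLinearMap, LinearMap.toAddMonoidHom_coe]
      exact Submodule.subset_span ⟨m, a, f n, by
        erw [map_sub, TensorProduct.map_tmul, TensorProduct.map_tmul]
        simp [map_smul]⟩)

/-- A right `V`-module `M` is flat if tensoring with `M` preserves injectivity of maps of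
left `V`-modules (equivalently, the functor `M ⊗_V (-)` is exact). -/
def RightFlat (V : Type) [Ring V] (M : Type) [AddCommGroup M] [Module Vᵐᵒᵖ M] : Prop :=
  ∀ (N N' : Type) [AddCommGroup N] [Module V N] [AddCommGroup N'] [Module V N']
    (f : N →ₗ[V] N'), Function.Injective f → Function.Injective (NCTensor.map V M f)

section NC

variable (V : Type) [Ring V] (M : Type) [AddCommGroup M] [Module Vᵐᵒᵖ M]

/-- The quotient map onto the noncommutative tensor product. -/
noncomputable def NCmk (N : Type) [AddCommGroup N] [Module V N] :
    M ⊗[ℤ] N →ₗ[ℤ] NCTensor V M N := (tensorRel V M N).mkQ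

variable {M}

lemma NCmk_surjective (N : Type) [AddCommGroup N] [Module V N] :
    Function.Surjective (NCmk V M N) := Submodule.mkQ_surjective _

lemma NC_rel {N : Type} [AddCommGroup N] [Module V N] (m : M) (a : V) (n : N) :
    NCmk V M N ((op a • m) ⊗ₜ n) = NCmk V M N (m ⊗ₜ (a • n)) := by
  rw [NCmk, Submodule.mkQ_apply, Submodule.mkQ_apply, Submodule.Quotient.eq]
  exact Submodule.subset_span ⟨m, a, n, rfl⟩

lemma NC_ext {N : Type} [AddCommGroup N] [Module V N] {P : Type} [AddCommGroup P] [Module ℤ P]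
    {f g : NCTensor V M N →ₗ[ℤ] P}
    (h : ∀ (m : M) (n : N), f (NCmk V M N (m ⊗ₜ n)) = g (NCmk V M N (m ⊗ₜ n))) : f = g := by
  apply Submodule.linearMap_qext
  exact TensorProduct.ext' h

lemma NCmap_mk {N N' : Type} [AddCommGroup N] [Module V N] [AddCommGroup N'] [Module V N']
    (f : N →ₗ[V] N') (m : M) (n : N) :
    NCTensor.map V M f (NCmk V M N (m ⊗ₜ n)) = NCmk V M N' (m ⊗ₜ f n) := by
  simp [NCTensor.map, NCmk, Submodule.mapQ_apply]
  rfl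

variable {M' M'' : Type} [AddCommGroup M'] [Module Vᵐᵒᵖ M'] [AddCommGroup M''] [Module Vᵐᵒᵖ M'']

/-- Functoriality of the noncommutative tensor product in the first variable. -/
noncomputable def NCmap₁ (g : M →ₗ[Vᵐᵒᵖ] M') (N : Type) [AddCommGroup N] [Module V N] :
    NCTensor V M N →ₗ[ℤ] NCTensor V M' N :=
  Submodule.mapQ _ _
    (TensorProduct.map g.toAddMonoidHom.toIntLinearMap LinearMap.id)
    (by
      rw [tensorRel, Submodule.span_le]
      rintro z ⟨m, a, n, rfl⟩
      simp only [SetLike.mem_coe, Submodule.mem_comap, map_sub, TensorProduct.map_tmul,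
        LinearMap.id_coe, id_eq, AddMonoidHom.coe_toIntLinearMap, LinearMap.toAddMonoidHom_coe]
      exact Submodule.subset_span ⟨g m, a, n, by
        erw [map_sub, TensorProduct.map_tmul, TensorProduct.map_tmul]
        simp [map_smul]⟩)

lemma NCmap₁_mk (g : M →ₗ[Vᵐᵒᵖ] M') (N : Type) [AddCommGroup N] [Module V N] (m : M) (n : N) :
    NCmap₁ V g N (NCmk V M N (m ⊗ₜ n)) = NCmk V M' N (g m ⊗ₜ n) := by
  simp [NCmap₁, NCmk, Submodule.mapQ_apply]
  rfl

lemma NCmap₁_comp (g' : M' →ₗ[Vᵐᵒᵖ] M'') (g : M →ₗ[Vᵐᵒᵖ] M') (N : Type) [AddCommGroup N]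
    [Module V N] (z : NCTensor V M N) :
    NCmap₁ V g' N (NCmap₁ V g N z) = NCmap₁ V (g'.comp g) N z := by
  have : (NCmap₁ V g' N).comp (NCmap₁ V g N) = NCmap₁ V (g'.comp g) N :=
    NC_ext V fun m n => by simp [NCmap₁_mk]
  exact DFunLike.congr_fun this z

lemma NCmap₁_id (N : Type) [AddCommGroup N] [Module V N] (z : NCTensor V M N) :
    NCmap₁ V (LinearMap.id : M →ₗ[Vᵐᵒᵖ] M) N z = z := by
  have : NCmap₁ V (LinearMap.id : M →ₗ[Vᵐᵒᵖ] M) N = LinearMap.id :=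
    NC_ext V fun m n => by simp [NCmap₁_mk]
  rw [this]; rfl

lemma NCmap_naturality {N N' : Type} [AddCommGroup N] [Module V N] [AddCommGroup N']
    [Module V N'] (g : M →ₗ[Vᵐᵒᵖ] M') (f : N →ₗ[V] N') (z : NCTensor V M N) :
    NCTensor.map V M' f (NCmap₁ V g N z) = NCmap₁ V g N' (NCTensor.map V M f z) := by
  have : (NCTensor.map V M' f).comp (NCmap₁ V g N)
      = (NCmap₁ V g N').comp (NCTensor.map V M f) :=
    NC_ext V fun m n => by simp [NCmap₁_mk, NCmap_mk]
  exact DFunLike.congr_fun this z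

end NC

section Free
variable (V : Type) [Ring V] (n : ℕ) (N : Type) [AddCommGroup N] [Module V N]

noncomputable def piOfBil : (Fin n → Vᵐᵒᵖ) →ₗ[ℤ] N →ₗ[ℤ] (Fin n → N) :=
  LinearMap.mk₂ ℤ (fun x c j => (x j).unop • c)
    (fun x y c => by funext j; simp [add_smul])
    (fun z x c => by funext j; show ((z • x) j).unop • c = z • _;
                     rw [Pi.smul_apply, MulOpposite.unop_smul, smul_assoc])
    (fun x c d => by funext j; simp [smul_add])
    (fun z x c => by funext j; exact smul_comm _ _ _)

/-- The canonical map `F ⊗_V N → Nⁿ` for the free right module `F = (Vᵐᵒᵖ)ⁿ`. -/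
noncomputable def piOf : NCTensor V (Fin n → Vᵐᵒᵖ) N →ₗ[ℤ] (Fin n → N) :=
  Submodule.liftQ _ (TensorProduct.lift (piOfBil V n N))
    (by
      rw [tensorRel, Submodule.span_le]
      rintro z ⟨m, a, c, rfl⟩
      simp only [SetLike.mem_coe, LinearMap.mem_ker, map_sub, TensorProduct.lift.tmul]
      show TensorProduct.lift (piOfBil V n N) (_ - _) = 0
      rw [map_sub, TensorProduct.lift.tmul, TensorProduct.lift.tmul]
      rw [sub_eq_zero]
      funext j
      show ((op a • m) j).unop • c = (m j).unop • (a • c)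
      rw [Pi.smul_apply, smul_eq_mul, unop_mul, unop_op, mul_smul])

lemma piOf_mk (x : Fin n → Vᵐᵒᵖ) (c : N) :
    piOf V n N (NCmk V _ N (x ⊗ₜ c)) = fun j => (x j).unop • c := rfl

/-- The inverse map `Nⁿ → F ⊗_V N`. -/
noncomputable def piTo : (Fin n → N) →ₗ[ℤ] NCTensor V (Fin n → Vᵐᵒᵖ) N :=
  ∑ j : Fin n, (NCmk V _ N).comp
    ((TensorProduct.mk ℤ (Fin n → Vᵐᵒᵖ) N (Pi.single j 1)).comp (LinearMap.proj j))

lemma piTo_apply (v : Fin n → N) :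
    piTo V n N v = ∑ j : Fin n, NCmk V _ N ((Pi.single j 1 : Fin n → Vᵐᵒᵖ) ⊗ₜ v j) := by
  simp [piTo, LinearMap.sum_apply]
  rfl

lemma piOf_piTo (v : Fin n → N) : piOf V n N (piTo V n N v) = v := by
  rw [piTo_apply, map_sum]
  funext i
  rw [Finset.sum_apply]
  have : ∀ j : Fin n, piOf V n N (NCmk V _ N ((Pi.single j 1 : Fin n → Vᵐᵒᵖ) ⊗ₜ v j)) i
      = if i = j then v j else 0 := by
    intro j
    rw [piOf_mk]
    simp only [Pi.single_apply]
    split <;> simp_all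
  simp only [this]
  simp

lemma piTo_piOf (z : NCTensor V (Fin n → Vᵐᵒᵖ) N) : piTo V n N (piOf V n N z) = z := by
  obtain ⟨w, rfl⟩ := Submodule.mkQ_surjective _ z
  show piTo V n N (piOf V n N (NCmk V _ N w)) = NCmk V _ N w
  induction w using TensorProduct.induction_on with
  | zero => simp
  | add x y hx hy => simp only [map_add, hx, hy]
  | tmul x c =>
    rw [piOf_mk, piTo_apply]
    have : ∀ j : Fin n, NCmk V _ N ((Pi.single j 1 : Fin n → Vᵐᵒᵖ) ⊗ₜ ((x j).unop • c))
        = NCmk V _ N ((Pi.single j (x j) : Fin n → Vᵐᵒᵖ) ⊗ₜ c) := by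
      intro j
      rw [← NC_rel]
      congr 1
      have hx : (op ((x j).unop) • (Pi.single j 1 : Fin n → Vᵐᵒᵖ)) = Pi.single j (x j) := by
        funext i
        show op ((x j).unop) * (Pi.single j 1 : Fin n → Vᵐᵒᵖ) i = _
        simp [Pi.single_apply]
      rw [hx]
    simp only [this]
    rw [← map_sum, ← TensorProduct.sum_tmul, Finset.univ_sum_single]

variable {n N} in
lemma piOf_naturality {N' : Type} [AddCommGroup N'] [Module V N'] (f : N →ₗ[V] N')
    (z : NCTensor V (Fin n → Vᵐᵒᵖ) N) :
    piOf V n N' (NCTensor.map V (Fin n → Vᵐᵒᵖ) f z) = fun j => f (piOf V n N z j) := by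
  have h : (piOf V n N').comp (NCTensor.map V (Fin n → Vᵐᵒᵖ) f)
      = (LinearMap.compLeft f.toAddMonoidHom.toIntLinearMap (Fin n)).comp (piOf V n N) :=
    NC_ext V fun x c => by
      rw [LinearMap.comp_apply, LinearMap.comp_apply, NCmap_mk, piOf_mk, piOf_mk]
      funext j
      simp [LinearMap.compLeft]
  exact DFunLike.congr_fun h z

variable {n N} in
lemma NCmap_free_injective {N' : Type} [AddCommGroup N'] [Module V N'] (f : N →ₗ[V] N')
    (hf : Function.Injective f) :
    Function.Injective (NCTensor.map V (Fin n → Vᵐᵒᵖ) f) := by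
  intro x y h
  have h2 := congrArg (piOf V n N') h
  rw [piOf_naturality, piOf_naturality] at h2
  have h3 : piOf V n N x = piOf V n N y := funext fun j => hf (congrFun h2 j)
  rw [← piTo_piOf V n N x, ← piTo_piOf V n N y, h3]

/-- A finitely generated projective right module is flat. -/
lemma rightFlat_of_projective (M : Type) [AddCommGroup M] [Module Vᵐᵒᵖ M]
    [Module.Finite Vᵐᵒᵖ M] [Module.Projective Vᵐᵒᵖ M] : RightFlat V M := by
  obtain ⟨n, p, hp⟩ := Module.Finite.exists_fin' Vᵐᵒᵖ M
  obtain ⟨s, hs⟩ := Module.projective_lifting_property p LinearMap.id hp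
  intro N N' _ _ _ _ f hf x y hxy
  have h1 : NCTensor.map V (Fin n → Vᵐᵒᵖ) f (NCmap₁ V s N x)
      = NCTensor.map V (Fin n → Vᵐᵒᵖ) f (NCmap₁ V s N y) := by
    rw [NCmap_naturality, NCmap_naturality, hxy]
  have h2 := NCmap_free_injective V f hf h1
  have h3 := congrArg (NCmap₁ V p N) h2
  rwa [NCmap₁_comp, NCmap₁_comp, hs, NCmap₁_id, NCmap₁_id] at h3

end Free


section Villamayor

variable (V : Type) [Ring V] {M : Type} [AddCommGroup M] [Module Vᵐᵒᵖ M]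

lemma single_smul_one {n : ℕ} (r : Vᵐᵒᵖ) (j : Fin n) :
    r • (Pi.single j 1 : Fin n → Vᵐᵒᵖ) = Pi.single j r := by
  funext i
  show r * (Pi.single j 1 : Fin n → Vᵐᵒᵖ) i = _
  simp [Pi.single_apply]

lemma villamayor_single (hflat : RightFlat V M) {n : ℕ}
    (p : (Fin n → Vᵐᵒᵖ) →ₗ[Vᵐᵒᵖ] M) (hp : Function.Surjective p)
    (k : Fin n → Vᵐᵒᵖ) (hk : p k = 0) :
    ∃ θ : (Fin n → Vᵐᵒᵖ) →ₗ[Vᵐᵒᵖ] (Fin n → Vᵐᵒᵖ),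
      (∀ x, p (θ x) = 0) ∧ θ k = k := by
  classical
  set a : Fin n → V := fun j => (k j).unop with ha
  set I : Submodule V V := Submodule.span V (Set.range a) with hI
  have haI : ∀ j, a j ∈ I := fun j => Submodule.subset_span ⟨j, rfl⟩
  set abar : Fin n → I := fun j => ⟨a j, haI j⟩ with habar
  set w : M ⊗[ℤ] I := ∑ j, (p (Pi.single j 1)) ⊗ₜ abar j with hw
  -- the canonical element maps to zero in `M ⊗_V V`
  have hmap : NCTensor.map V M I.subtype (NCmk V M I w) = 0 := by
    rw [hw, map_sum, map_sum]
    have h1 : ∀ j : Fin n, NCTensor.map V M I.subtype (NCmk V M I ((p (Pi.single j 1)) ⊗ₜ abar j))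
        = NCmk V M V ((op (a j) • p (Pi.single j 1)) ⊗ₜ (1 : V)) := by
      intro j
      rw [NCmap_mk, NC_rel]
      congr 2
      simp [smul_eq_mul]
      rfl
    simp only [h1]
    rw [← map_sum, ← TensorProduct.sum_tmul]
    have h2 : (∑ j, op (a j) • p (Pi.single j 1)) = p k := by
      have h3 : ∀ j : Fin n, op (a j) • p (Pi.single j 1) = p (Pi.single j (k j)) := by
        intro j
        rw [← map_smul, single_smul_one]
        congr 2
      simp only [h3]
      rw [← map_sum]
      congr 1
      exact Finset.univ_sum_single k
    rw [h2, hk, TensorProduct.zero_tmul, map_zero]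
  -- flatness: the element is zero in `M ⊗_V I`
  have hz0 : NCmk V M I w = 0 := by
    apply hflat I V I.subtype (Submodule.injective_subtype I)
    rw [hmap, map_zero]
  have hwrel : w ∈ tensorRel V M I := by
    rwa [NCmk, Submodule.mkQ_apply, Submodule.Quotient.mk_eq_zero] at hz0
  -- pull back along the presentation
  set pZ := p.toAddMonoidHom.toIntLinearMap with hpZ
  set iK := (LinearMap.ker p).subtype.toAddMonoidHom.toIntLinearMap with hiK
  have hrel : tensorRel V M I = Submodule.map (LinearMap.rTensor I pZ) (tensorRel V (Fin n → Vᵐᵒᵖ) I) := by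
    rw [tensorRel, tensorRel]
    erw [Submodule.map_span]
    congr 1
    ext z
    constructor
    · rintro ⟨m, b, c, rfl⟩
      obtain ⟨x, rfl⟩ := hp m
      refine ⟨(op b • x) ⊗ₜ c - x ⊗ₜ (b • c), ⟨x, b, c, rfl⟩, ?_⟩
      rw [map_sub, LinearMap.rTensor_tmul, LinearMap.rTensor_tmul]
      simp only [hpZ, AddMonoidHom.coe_toIntLinearMap, LinearMap.toAddMonoidHom_coe, map_smul]
    · rintro ⟨_, ⟨x, b, c, rfl⟩, rfl⟩
      refine ⟨p x, b, c, ?_⟩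
      rw [map_sub, LinearMap.rTensor_tmul, LinearMap.rTensor_tmul]
      simp only [hpZ, AddMonoidHom.coe_toIntLinearMap, LinearMap.toAddMonoidHom_coe, map_smul]
  set w' : (Fin n → Vᵐᵒᵖ) ⊗[ℤ] I := ∑ j, (Pi.single j 1 : Fin n → Vᵐᵒᵖ) ⊗ₜ abar j with hw'
  have hPw' : LinearMap.rTensor I pZ w' = w := by
    rw [hw', hw, map_sum]
    refine Finset.sum_congr rfl fun j _ => ?_
    rw [LinearMap.rTensor_tmul]
    rfl
  rw [hrel] at hwrel
  obtain ⟨v, hv, hPv⟩ := hwrel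
  have hexact : Function.Exact iK pZ := by
    intro y
    constructor
    · intro h; exact ⟨⟨y, h⟩, rfl⟩
    · rintro ⟨x, rfl⟩; exact x.2
  have hker : LinearMap.rTensor I pZ (w' - v) = 0 := by
    rw [map_sub, hPw', hPv, sub_self]
  obtain ⟨u, hu⟩ := (rTensor_exact I hexact hp (w' - v)).mp hker
  -- compute coordinates
  have hcls : piOf V n I (NCmk V (Fin n → Vᵐᵒᵖ) I w') = abar := by
    have : NCmk V (Fin n → Vᵐᵒᵖ) I w' = piTo V n I abar := by
      rw [piTo_apply, hw', map_sum]
    rw [this, piOf_piTo]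
  have hcls2 : NCmk V (Fin n → Vᵐᵒᵖ) I w' = NCmk V (Fin n → Vᵐᵒᵖ) I (LinearMap.rTensor I iK u) := by
    rw [hu, map_sub]
    have : NCmk V (Fin n → Vᵐᵒᵖ) I v = 0 := by
      rw [NCmk, Submodule.mkQ_apply, Submodule.Quotient.mk_eq_zero]
      exact hv
    rw [this, sub_zero]
  obtain ⟨S, hS⟩ := TensorProduct.exists_finset u
  have hcoord : abar = ∑ t ∈ S, fun i => (((t.1 : Fin n → Vᵐᵒᵖ)) i).unop • t.2 := by
    rw [← hcls, hcls2, hS, map_sum, map_sum, map_sum]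
    refine Finset.sum_congr rfl fun t _ => ?_
    rw [LinearMap.rTensor_tmul]
    exact piOf_mk V n I _ _
  -- choose coefficients expressing elements of I in terms of the `a j`
  have hD : ∀ c : I, ∃ d : Fin n → V, ∑ j, d j • a j = (c : V) := by
    intro c
    exact (Submodule.mem_span_range_iff_exists_fun V).mp (hI ▸ c.2)
  choose D hD using hD
  set y : Fin n → (Fin n → Vᵐᵒᵖ) := fun j => ∑ t ∈ S, op (D t.2 j) • (t.1 : Fin n → Vᵐᵒᵖ) with hy
  have hyK : ∀ j, p (y j) = 0 := by
    intro j
    rw [hy, map_sum]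
    refine Finset.sum_eq_zero fun t _ => ?_
    rw [map_smul]
    have : p (t.1 : Fin n → Vᵐᵒᵖ) = 0 := t.1.2
    rw [this, smul_zero]
  refine ⟨{ toFun := fun x => ∑ j, x j • y j
            map_add' := fun x x' => by simp [add_smul, Finset.sum_add_distrib]
            map_smul' := fun r x => by
              simp only [RingHom.id_apply]
              rw [Finset.smul_sum]
              refine Finset.sum_congr rfl fun j _ => ?_
              rw [Pi.smul_apply, smul_eq_mul, mul_smul] }, ?_, ?_⟩
  · intro x
    show p (∑ j, x j • y j) = 0
    rw [map_sum]
    exact Finset.sum_eq_zero fun j _ => by rw [map_smul, hyK, smul_zero]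
  · show ∑ j, k j • y j = k
    have hop : ∀ j, k j = op (a j) := by intro j; simp [ha]
    have step1 : ∑ j, k j • y j = ∑ t ∈ S, op ((t.2 : V)) • (t.1 : Fin n → Vᵐᵒᵖ) := by
      have h3 : ∀ j : Fin n, k j • y j
          = ∑ t ∈ S, op (D t.2 j * a j) • (t.1 : Fin n → Vᵐᵒᵖ) := by
        intro j
        rw [hy, Finset.smul_sum]
        refine Finset.sum_congr rfl fun t _ => ?_
        rw [smul_smul]
        congr 1
      simp only [h3]
      rw [Finset.sum_comm]
      refine Finset.sum_congr rfl fun t _ => ?_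
      rw [← Finset.sum_smul]
      congr 1
      rw [← Finset.op_sum]
      congr 1
      simpa [smul_eq_mul] using hD t.2
    rw [step1]
    funext i
    have hci := congrFun hcoord i
    have hci' : a i = ∑ t ∈ S, ((t.1 : Fin n → Vᵐᵒᵖ) i).unop * (t.2 : V) := by
      rw [Finset.sum_apply] at hci
      have h4 := congrArg (Subtype.val) hci
      rw [AddSubmonoidClass.coe_finset_sum] at h4
      simpa [habar, smul_eq_mul] using h4
    rw [Finset.sum_apply]
    have : ∀ t ∈ S, (op ((t.2 : V)) • (t.1 : Fin n → Vᵐᵒᵖ)) i = op (((t.1 : Fin n → Vᵐᵒᵖ) i).unop * (t.2 : V)) := by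
      intro t _
      rw [Pi.smul_apply, smul_eq_mul]
      conv_lhs => rw [← op_unop ((t.1 : Fin n → Vᵐᵒᵖ) i)]
      rw [← op_mul]
    rw [Finset.sum_congr rfl this, ← Finset.op_sum, ← hci']
    simp [ha]

lemma villamayor_multi (hflat : RightFlat V M) {n : ℕ}
    (p : (Fin n → Vᵐᵒᵖ) →ₗ[Vᵐᵒᵖ] M) (hp : Function.Surjective p) (N : ℕ) :
    ∀ (l : List (Fin n → Vᵐᵒᵖ)), l.length ≤ N → (∀ x ∈ l, p x = 0) →
    ∃ θ : (Fin n → Vᵐᵒᵖ) →ₗ[Vᵐᵒᵖ] (Fin n → Vᵐᵒᵖ),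
      (∀ x, p (θ x) = 0) ∧ ∀ x ∈ l, θ x = x := by
  induction N with
  | zero =>
    intro l hl _
    rw [Nat.le_zero, List.length_eq_zero_iff] at hl
    subst hl
    exact ⟨0, by simp, by simp⟩
  | succ N ih =>
    intro l hl hl0
    match l with
    | [] => exact ⟨0, by simp, by simp⟩
    | kh :: kt =>
      obtain ⟨θ₁, hθ₁K, hθ₁⟩ := villamayor_single V hflat p hp kh (hl0 kh (by simp))
      obtain ⟨θ', hθ'K, hθ'⟩ := ih (kt.map (fun x => x - θ₁ x))
        (by simpa using Nat.succ_le_succ_iff.mp hl)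
        (by
          intro x hx
          simp only [List.mem_map] at hx
          obtain ⟨z, hz, rfl⟩ := hx
          rw [map_sub, hl0 z (by simp [hz]), hθ₁K, sub_zero])
      refine ⟨θ₁ + θ'.comp (LinearMap.id - θ₁), ?_, ?_⟩
      · intro x
        simp only [LinearMap.add_apply, LinearMap.comp_apply, map_add]
        rw [hθ₁K, hθ'K, add_zero]
      · intro x hx
        rcases List.mem_cons.mp hx with rfl | hx
        · simp only [LinearMap.add_apply, LinearMap.comp_apply, LinearMap.sub_apply,
            LinearMap.id_apply, hθ₁, sub_self, map_zero, add_zero]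
        · have h5 := hθ' (x - θ₁ x) (List.mem_map.mpr ⟨x, hx, rfl⟩)
          simp only [LinearMap.add_apply, LinearMap.comp_apply, LinearMap.sub_apply,
            LinearMap.id_apply, h5]
          abel

/-- A finitely presented flat right module is projective. -/
lemma projective_of_fp_rightFlat (M : Type) [AddCommGroup M] [Module Vᵐᵒᵖ M]
    [Module.FinitePresentation Vᵐᵒᵖ M] (hflat : RightFlat V M) :
    Module.Projective Vᵐᵒᵖ M := by
  classical
  obtain ⟨n, p, hp⟩ := Module.Finite.exists_fin' Vᵐᵒᵖ M
  obtain ⟨s, hs⟩ := Module.FinitePresentation.fg_ker p hp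
  obtain ⟨θ, hθK, hθfix⟩ := villamayor_multi V hflat p hp s.toList.length s.toList le_rfl
    (fun x hx => by
      have : x ∈ LinearMap.ker p := hs ▸ Submodule.subset_span (by simpa using hx)
      exact this)
  have hfixK : ∀ x ∈ LinearMap.ker p, θ x = x := by
    intro x hx
    have hle : Submodule.span Vᵐᵒᵖ (s : Set (Fin n → Vᵐᵒᵖ))
        ≤ LinearMap.eqLocus θ LinearMap.id := by
      rw [Submodule.span_le]
      intro z hz
      exact hθfix z (by simpa using hz)
    rw [← hs] at hx
    exact hle hx
  set σ' : (Fin n → Vᵐᵒᵖ) →ₗ[Vᵐᵒᵖ] (Fin n → Vᵐᵒᵖ) := LinearMap.id - θ with hσ'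
  have hker : LinearMap.ker p ≤ LinearMap.ker σ' := by
    intro x hx
    simp [hσ', LinearMap.sub_apply, hfixK x hx]
  set q := (LinearMap.ker p).liftQ σ' hker with hq
  set pbar := (LinearMap.ker p).liftQ p le_rfl with hpbar
  have hbij : Function.Bijective pbar := by
    constructor
    · rw [← LinearMap.ker_eq_bot, Submodule.ker_liftQ_eq_bot]
      exact le_rfl
    · intro m
      obtain ⟨x, rfl⟩ := hp m
      exact ⟨Submodule.Quotient.mk x, by rw [hpbar, Submodule.liftQ_apply]⟩
  set e := LinearEquiv.ofBijective pbar hbij with he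
  have hpi : p.comp (q ∘ₗ (e.symm : M →ₗ[Vᵐᵒᵖ] _)) = LinearMap.id := by
    apply LinearMap.ext
    intro m
    obtain ⟨x, rfl⟩ := hp m
    have hesymm : e.symm (p x) = Submodule.Quotient.mk x := by
      apply e.injective
      rw [LinearEquiv.apply_symm_apply]
      show p x = pbar (Submodule.Quotient.mk x)
      rw [hpbar, Submodule.liftQ_apply]
    simp only [LinearMap.comp_apply, LinearMap.coe_comp, Function.comp_apply,
      LinearEquiv.coe_coe, hesymm, LinearMap.id_apply]
    rw [hq, Submodule.liftQ_apply]
    show p (x - θ x) = p x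
    rw [map_sub, hθK x, sub_zero]
  exact Module.Projective.of_split (q ∘ₗ (e.symm : M →ₗ[Vᵐᵒᵖ] _)) p hpi

end Villamayor

/-- A (right) module over any ring is finitely generated and projective
if and only if it is finitely presented and flat. -/
theorem stmt_6 (R : Type) [Ring R] (M : Type) [AddCommGroup M] [Module Rᵐᵒᵖ M] :
    (Module.Finite Rᵐᵒᵖ M ∧ Module.Projective Rᵐᵒᵖ M) ↔
      (Module.FinitePresentation Rᵐᵒᵖ M ∧ RightFlat R M) := by
  constructor
  · rintro ⟨hfin, hproj⟩
    exact ⟨Module.finitePresentation_of_projective Rᵐᵒᵖ M, rightFlat_of_projective R M⟩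
  · rintro ⟨hfp, hflat⟩
    exact ⟨inferInstance, projective_of_fp_rightFlat R M hflat⟩
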